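/- Let X and Y be complex Banach spaces, A ∈ B(X), B ∈ B(Y), C ∈ B(Y, X), and let M_C ∈ B(X ⊕ Y) be the upper-triangular operator matrix M_C(x, y) = (Ax + Cy, By). If B is Drazin invertible, then M_C has finite descent if and only if A has finite descent, and M_C has finite ascent if and only if A has finite ascent. -/

import Mathlib

noncomputable section

open ContinuousLinearMap Metric Set

variable {E : Type*} [NormedAddCommGroup E] [NormedSpace ℂ E]
variable {X Y : Type*} [NormedAddCommGroup X] [NormedSpace ℂ X] [CompleteSpace X]
  [NormedAddCommGroup Y] [NormedSpace ℂ Y] [CompleteSpace Y]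

/-- `T` has finite ascent: some power has the same kernel as the next one. -/
def HasFiniteAscent (T : E →L[ℂ] E) : Prop :=
  ∃ k : ℕ, LinearMap.ker ((T ^ k : E →L[ℂ] E) : E →ₗ[ℂ] E) = LinearMap.ker ((T ^ (k + 1) : E →L[ℂ] E) : E →ₗ[ℂ] E)

/-- `T` has finite descent: some power has the same range as the next one. -/
def HasFiniteDescent (T : E →L[ℂ] E) : Prop :=
  ∃ k : ℕ, LinearMap.range ((T ^ k : E →L[ℂ] E) : E →ₗ[ℂ] E) = LinearMap.range ((T ^ (k + 1) : E →L[ℂ] E) : E →ₗ[ℂ] E)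

/-- `T` is Drazin invertible. -/
def IsDrazinInvertible (T : E →L[ℂ] E) : Prop :=
  ∃ S : E →L[ℂ] E, ∃ k : ℕ, T * S = S * T ∧ S * T * S = S ∧ T ^ (k + 1) * S = T ^ k

/-- The upper-triangular operator matrix `M_C (x, y) = (A x + C y, B y)` on `X ⊕ Y`. -/
def ucMat (A : X →L[ℂ] X) (B : Y →L[ℂ] Y) (C : Y →L[ℂ] X) :
    (X × Y) →L[ℂ] (X × Y) :=
  (A.comp (ContinuousLinearMap.fst ℂ X Y) + C.comp (ContinuousLinearMap.snd ℂ X Y)).prod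
    (B.comp (ContinuousLinearMap.snd ℂ X Y))

set_option linter.unusedSectionVars false

lemma powApplyAdd (T : E →L[ℂ] E) (a b : ℕ) (x : E) :
    (T ^ (a + b)) x = (T ^ a) ((T ^ b) x) := by
  rw [pow_add, mul_apply_eq_comp]

lemma ucMat_apply (A : X →L[ℂ] X) (B : Y →L[ℂ] Y) (C : Y →L[ℂ] X) (x : X) (y : Y) :
    ucMat A B C (x, y) = (A x + C y, B y) := rfl

lemma ucMat_pow_apply (A : X →L[ℂ] X) (B : Y →L[ℂ] Y) (C : Y →L[ℂ] X) (m : ℕ) (x : X) (y : Y) :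
    ((ucMat A B C) ^ m) (x, y) =
      ((A ^ m) x + ∑ j ∈ Finset.range m, (A ^ (m - 1 - j)) (C ((B ^ j) y)), (B ^ m) y) := by
  induction m generalizing x y with
  | zero => simp
  | succ m ih =>
    rw [pow_succ, mul_apply_eq_comp, ucMat_apply, ih (A x + C y) (B y)]
    refine Prod.ext ?_ ?_
    · rw [Finset.sum_range_succ']
      have h1 : (A ^ m) (A x) = (A ^ (m+1)) x := by rw [pow_succ, mul_apply_eq_comp]
      have h2 : ∀ j, (B ^ j) (B y) = (B ^ (j+1)) y := fun j => by rw [pow_succ, mul_apply_eq_comp]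
      have h3 : ∀ j : ℕ, m - (j + 1) = m - 1 - j := fun j => by omega
      simp only [map_add, h1, h2, pow_zero, one_apply_eq_self, Nat.add_sub_cancel, Nat.sub_zero]
      rw [show (∑ j ∈ Finset.range m, (A ^ (m - (j+1))) (C ((B ^ (j+1)) y))) =
          ∑ j ∈ Finset.range m, (A ^ (m - 1 - j)) (C ((B ^ (j+1)) y)) from
        Finset.sum_congr rfl (fun j _ => by rw [h3 j])]
      abel
    · show (B ^ m) (B y) = (B ^ (m+1)) y
      rw [pow_succ, mul_apply_eq_comp]

lemma ker_pow_succ_le (T : E →L[ℂ] E) (n : ℕ) :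
    LinearMap.ker ((T ^ n : E →L[ℂ] E) : E →ₗ[ℂ] E) ≤ LinearMap.ker ((T ^ (n + 1) : E →L[ℂ] E) : E →ₗ[ℂ] E) := by
  intro x hx
  have hx' : (T ^ n) x = 0 := LinearMap.mem_ker.mp hx
  refine LinearMap.mem_ker.mpr ?_
  rw [ContinuousLinearMap.coe_coe, show n + 1 = 1 + n by omega, powApplyAdd, hx', map_zero]

lemma range_pow_succ_le (T : E →L[ℂ] E) (n : ℕ) :
    LinearMap.range ((T ^ (n + 1) : E →L[ℂ] E) : E →ₗ[ℂ] E) ≤ LinearMap.range ((T ^ n : E →L[ℂ] E) : E →ₗ[ℂ] E) := by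
  rintro x ⟨u, rfl⟩
  exact ⟨T u, by rw [ContinuousLinearMap.coe_coe, ContinuousLinearMap.coe_coe, ← mul_apply_eq_comp, ← pow_succ]⟩

lemma ker_stab (T : E →L[ℂ] E) {p : ℕ}
    (h : LinearMap.ker ((T ^ p : E →L[ℂ] E) : E →ₗ[ℂ] E) = LinearMap.ker ((T ^ (p + 1) : E →L[ℂ] E) : E →ₗ[ℂ] E)) (d : ℕ) :
    LinearMap.ker ((T ^ (p + d) : E →L[ℂ] E) : E →ₗ[ℂ] E) = LinearMap.ker ((T ^ p : E →L[ℂ] E) : E →ₗ[ℂ] E) := by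
  induction d with
  | zero => rfl
  | succ d ih =>
    apply le_antisymm
    · intro x hx
      have hx' : (T ^ (p + (d + 1))) x = 0 := LinearMap.mem_ker.mp hx
      have h1 : (T ^ (p + 1)) ((T ^ d) x) = 0 := by
        rw [← powApplyAdd, show p + 1 + d = p + (d + 1) by omega]; exact hx'
      have h2 : (T ^ d) x ∈ LinearMap.ker ((T ^ (p + 1) : E →L[ℂ] E) : E →ₗ[ℂ] E) := LinearMap.mem_ker.mpr h1
      rw [← h] at h2
      have h3 : (T ^ (p + d)) x = 0 := by
        rw [powApplyAdd]; exact LinearMap.mem_ker.mp h2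
      rw [← ih]
      exact LinearMap.mem_ker.mpr h3
    · intro x hx
      have hx' : (T ^ p) x = 0 := LinearMap.mem_ker.mp hx
      refine LinearMap.mem_ker.mpr ?_
      rw [ContinuousLinearMap.coe_coe, show p + (d + 1) = (d + 1) + p by omega, powApplyAdd, hx', map_zero]

lemma range_stab (T : E →L[ℂ] E) {p : ℕ}
    (h : LinearMap.range ((T ^ p : E →L[ℂ] E) : E →ₗ[ℂ] E) = LinearMap.range ((T ^ (p + 1) : E →L[ℂ] E) : E →ₗ[ℂ] E)) (d : ℕ) :
    LinearMap.range ((T ^ (p + d) : E →L[ℂ] E) : E →ₗ[ℂ] E) = LinearMap.range ((T ^ p : E →L[ℂ] E) : E →ₗ[ℂ] E) := by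
  induction d with
  | zero => rfl
  | succ d ih =>
    apply le_antisymm
    · rintro x ⟨u, rfl⟩
      rw [← ih]
      exact ⟨T u, by rw [ContinuousLinearMap.coe_coe, ContinuousLinearMap.coe_coe, ← mul_apply_eq_comp, ← pow_succ, show p + d + 1 = p + (d + 1) by omega]⟩
    · intro x hx
      rw [← ih] at hx
      obtain ⟨w, rfl⟩ := hx
      have h1 : (T ^ p) w ∈ LinearMap.range ((T ^ (p + 1) : E →L[ℂ] E) : E →ₗ[ℂ] E) := h ▸ ⟨w, rfl⟩
      obtain ⟨z, hz⟩ := h1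
      refine ⟨z, ?_⟩
      rw [ContinuousLinearMap.coe_coe] at hz
      rw [ContinuousLinearMap.coe_coe, ContinuousLinearMap.coe_coe, show p + (d + 1) = d + (p + 1) by omega, powApplyAdd, hz,
        show p + d = d + p by omega, powApplyAdd]

theorem stmt5 (A : X →L[ℂ] X) (B : Y →L[ℂ] Y) (C : Y →L[ℂ] X) (hB : IsDrazinInvertible B) :
    (HasFiniteDescent (ucMat A B C) ↔ HasFiniteDescent A) ∧
      (HasFiniteAscent (ucMat A B C) ↔ HasFiniteAscent A) := by
  obtain ⟨S, k, hBS, hSBS, hBk⟩ := hB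
  have hc : Commute B S := hBS
  set M := ucMat A B C with hM
  -- Drazin consequences
  have drz1 : ∀ j : ℕ, B ^ (k + j) * S ^ j = B ^ k := by
    intro j
    induction j with
    | zero => simp
    | succ j ih =>
      calc B ^ (k + (j + 1)) * S ^ (j + 1)
          = (B ^ (k + j) * B) * (S ^ j * S) := by
            rw [show k + (j + 1) = (k + j) + 1 by omega, pow_succ, pow_succ]
        _ = B ^ (k + j) * ((B * S ^ j) * S) := by rw [mul_assoc, mul_assoc]
        _ = B ^ (k + j) * ((S ^ j * B) * S) := by rw [(hc.pow_right j).eq]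
        _ = (B ^ (k + j) * S ^ j) * (B * S) := by
            rw [mul_assoc (S ^ j) B S, ← mul_assoc]
        _ = B ^ k * (B * S) := by rw [ih]
        _ = B ^ (k + 1) * S := by rw [← mul_assoc, ← pow_succ]
        _ = B ^ k := hBk
  have drz_ker : ∀ m : ℕ, k ≤ m → ∀ y : Y, (B ^ m) y = 0 → (B ^ k) y = 0 := by
    intro m hkm y hy
    have e1 : B ^ m * S ^ (m - k) = B ^ k := by
      have := drz1 (m - k); rwa [Nat.add_sub_cancel' hkm] at this
    rw [← e1, (hc.pow_pow m (m - k)).eq, mul_apply_eq_comp, hy, map_zero]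
  have hBsub : ∀ (j : ℕ) (y : Y), k ≤ j → (B ^ k) y = 0 → (B ^ j) y = 0 := by
    intro j y hkj hy
    rw [show j = (j - k) + k by omega, powApplyAdd, hy, map_zero]
  have hw0 : ∀ v : Y, (B ^ k) (v - (B * S) v) = 0 := by
    intro v
    have : (B ^ k) ((B * S) v) = (B ^ k) v := by
      rw [← mul_apply_eq_comp, ← mul_assoc, ← pow_succ, hBk]
    rw [map_sub, this, sub_self]
  have hPP : ∀ t : ℕ, (B * S) ^ (t + 1) = B * S := by
    intro t
    induction t with
    | zero => rw [pow_one]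
    | succ t ih =>
      rw [pow_succ, ih, mul_assoc, ← mul_assoc S B S, hSBS]
  -- sum reduction helper
  have sum_reduce : ∀ (g : ℕ → ℕ) (n : ℕ), k ≤ n → ∀ y : Y, (B ^ k) y = 0 →
      ∑ j ∈ Finset.range n, (A ^ (g j)) (C ((B ^ j) y)) =
        ∑ j ∈ Finset.range k, (A ^ (g j)) (C ((B ^ j) y)) := by
    intro g n hkn y hy
    refine (Finset.sum_subset (Finset.range_subset_range.2 hkn) ?_).symm
    intro j hj hj'
    have hkj : k ≤ j := Nat.le_of_not_lt (fun h => hj' (Finset.mem_range.2 h))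
    rw [hBsub j y hkj hy, map_zero, map_zero]
  refine ⟨⟨?_, ?_⟩, ⟨?_, ?_⟩⟩
  · -- descent M → descent A
    rintro ⟨n₀, hd⟩
    have rstab := range_stab M hd
    refine ⟨n₀ + k, le_antisymm ?_ (range_pow_succ_le A (n₀ + k))⟩
    set m := n₀ + k with hm
    rintro x ⟨u, rfl⟩
    have hmem : ((A ^ m) u, (0 : Y)) ∈ LinearMap.range ((M ^ (m + k + 1) : (X × Y) →L[ℂ] (X × Y)) : (X × Y) →ₗ[ℂ] (X × Y)) := by
      rw [show m + k + 1 = n₀ + (2 * k + 1) by omega, rstab (2 * k + 1), ← rstab k, ← hm]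
      refine ⟨(u, 0), ?_⟩
      rw [hM, ContinuousLinearMap.coe_coe, ucMat_pow_apply]
      simp
    obtain ⟨⟨u', v'⟩, hw⟩ := hmem
    rw [hM, ContinuousLinearMap.coe_coe, ucMat_pow_apply] at hw
    have h1 : (A ^ (m + k + 1)) u' +
        ∑ j ∈ Finset.range (m + k + 1), (A ^ (m + k + 1 - 1 - j)) (C ((B ^ j) v')) = (A ^ m) u :=
      congrArg Prod.fst hw
    have h2 : (B ^ (m + k + 1)) v' = 0 := congrArg Prod.snd hw
    have h2' : (B ^ k) v' = 0 := drz_ker (m + k + 1) (by omega) v' h2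
    rw [sum_reduce _ (m + k + 1) (by omega) v' h2'] at h1
    refine ⟨(A ^ k) u' + ∑ j ∈ Finset.range k, (A ^ (k - 1 - j)) (C ((B ^ j) v')), ?_⟩
    rw [ContinuousLinearMap.coe_coe, ContinuousLinearMap.coe_coe, map_add, map_sum, ← powApplyAdd, show m + 1 + k = m + k + 1 by omega]
    rw [Finset.sum_congr rfl (fun j hj => by
      rw [← powApplyAdd, show m + 1 + (k - 1 - j) = m + k + 1 - 1 - j by
        have := Finset.mem_range.mp hj; omega])]
    exact h1
  · -- descent A → descent M
    rintro ⟨p, hp⟩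
    have rstab := range_stab A hp
    refine ⟨p + k, le_antisymm ?_ (range_pow_succ_le M (p + k))⟩
    set m := p + k with hm
    rintro z ⟨⟨u, v⟩, hw⟩
    rw [hM, ContinuousLinearMap.coe_coe, ucMat_pow_apply] at hw
    set v' := (S ^ (m + 1)) ((B ^ m) v) with hv'
    set w₁ := (B * S) v with hw₁
    have key : ∀ j : ℕ, (B ^ (j + 1)) v' = (B ^ j) w₁ := by
      intro j
      have opid : B ^ (j + 1) * (S ^ (m + 1) * B ^ m) = B ^ j * (B * S) := by
        calc B ^ (j + 1) * (S ^ (m + 1) * B ^ m)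
            = B ^ (j + 1) * (B ^ m * S ^ (m + 1)) := by rw [(hc.symm.pow_pow (m + 1) m).eq]
          _ = (B ^ (j + 1) * B ^ m) * S ^ (m + 1) := by rw [mul_assoc]
          _ = B ^ j * (B ^ (m + 1) * S ^ (m + 1)) := by
              rw [← pow_add, show j + 1 + m = j + (m + 1) by omega, pow_add, mul_assoc]
          _ = B ^ j * (B * S) ^ (m + 1) := by rw [← hc.mul_pow]
          _ = B ^ j * (B * S) := by rw [hPP m]
      calc (B ^ (j + 1)) v' = (B ^ (j + 1) * (S ^ (m + 1) * B ^ m)) v := by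
            rw [mul_apply_eq_comp, mul_apply_eq_comp]
        _ = (B ^ j * (B * S)) v := by rw [opid]
        _ = (B ^ j) w₁ := by rw [mul_apply_eq_comp]
    have hvw : (B ^ m) (v - w₁) = 0 := hBsub m (v - w₁) (by omega) (hw0 v)
    have hBmv : (B ^ m) w₁ = (B ^ m) v := by
      rw [map_sub] at hvw
      exact (sub_eq_zero.mp hvw).symm
    have hF1 : (B ^ (m + 1)) v' = (B ^ m) v := by rw [key m, hBmv]
    have ht : (A ^ m) (u - C v') +
        ∑ j ∈ Finset.range m, (A ^ (m - 1 - j)) (C ((B ^ j) (v - w₁)))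
        ∈ LinearMap.range ((A ^ (m + 1) : X →L[ℂ] X) : X →ₗ[ℂ] X) := by
      rw [show m + 1 = p + (k + 1) by omega, rstab (k + 1)]
      refine Submodule.add_mem _ ?_ (Submodule.sum_mem _ ?_)
      · rw [← rstab k, ← hm]; exact ⟨u - C v', rfl⟩
      · intro j hj
        by_cases hjk : j < k
        · have hmem : (A ^ (p + (k - 1 - j))) (C ((B ^ j) (v - w₁))) ∈
              LinearMap.range ((A ^ (p + (k - 1 - j)) : X →L[ℂ] X) : X →ₗ[ℂ] X) := ⟨_, rfl⟩
          rw [rstab (k - 1 - j)] at hmem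
          rwa [show m - 1 - j = p + (k - 1 - j) by omega]
        · have hz : (B ^ j) (v - w₁) = 0 := hBsub j _ (by omega) (hw0 v)
          rw [hz, map_zero, map_zero]
          exact Submodule.zero_mem _
    obtain ⟨u', hu'⟩ := ht
    refine ⟨(u', v'), ?_⟩
    rw [hM, ContinuousLinearMap.coe_coe, ucMat_pow_apply, ← hw]
    refine Prod.ext ?_ ?_
    · show (A ^ (m + 1)) u' + ∑ j ∈ Finset.range (m + 1), (A ^ (m + 1 - 1 - j)) (C ((B ^ j) v')) =
        (A ^ m) u + ∑ j ∈ Finset.range m, (A ^ (m - 1 - j)) (C ((B ^ j) v))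
      rw [Finset.sum_range_succ']
      rw [Finset.sum_congr rfl (fun j hj => by
        rw [key j, show m + 1 - 1 - (j + 1) = m - 1 - j by omega])]
      rw [ContinuousLinearMap.coe_coe] at hu'
      rw [hu']
      simp only [map_sub, Finset.sum_sub_distrib, pow_zero, one_apply_eq_self, Nat.add_sub_cancel,
        Nat.sub_zero]
      abel
    · show (B ^ (m + 1)) v' = (B ^ m) v
      exact hF1
  · -- ascent M → ascent A
    rintro ⟨n, hn⟩
    refine ⟨n, le_antisymm (ker_pow_succ_le A n) ?_⟩
    intro x hx
    have hx' : (A ^ (n + 1)) x = 0 := LinearMap.mem_ker.mp hx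
    have hmem : (x, (0 : Y)) ∈ LinearMap.ker ((M ^ (n + 1) : (X × Y) →L[ℂ] (X × Y)) : (X × Y) →ₗ[ℂ] (X × Y)) := by
      refine LinearMap.mem_ker.mpr ?_
      rw [hM, ContinuousLinearMap.coe_coe, ucMat_pow_apply]
      simp [hx']
    rw [← hn] at hmem
    have h1 : (A ^ n) x = 0 := by
      have hh := LinearMap.mem_ker.mp hmem
      rw [hM, ContinuousLinearMap.coe_coe, ucMat_pow_apply] at hh
      simpa using congrArg Prod.fst hh
    exact LinearMap.mem_ker.mpr h1
  · -- ascent A → ascent M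
    rintro ⟨p, hp⟩
    refine ⟨p + k, le_antisymm (ker_pow_succ_le M (p + k)) ?_⟩
    set n := p + k with hn
    rintro ⟨x, y⟩ hz
    have hz' : (M ^ (n + 1)) (x, y) = 0 := LinearMap.mem_ker.mp hz
    rw [hM, ucMat_pow_apply] at hz'
    have h1 : (A ^ (n + 1)) x +
        ∑ j ∈ Finset.range (n + 1), (A ^ (n + 1 - 1 - j)) (C ((B ^ j) y)) = 0 := by
      simpa using congrArg Prod.fst hz'
    have h2 : (B ^ (n + 1)) y = 0 := by simpa using congrArg Prod.snd hz'
    have hky : (B ^ k) y = 0 := drz_ker (n + 1) (by omega) y h2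
    have hBny : (B ^ n) y = 0 := hBsub n y (by omega) hky
    rw [sum_reduce _ (n + 1) (by omega) y hky] at h1
    have h3 : (A ^ (p + 1)) ((A ^ k) x +
        ∑ j ∈ Finset.range k, (A ^ (k - 1 - j)) (C ((B ^ j) y))) = 0 := by
      rw [map_add, map_sum, ← powApplyAdd, show p + 1 + k = n + 1 by omega]
      rw [Finset.sum_congr rfl (fun j hj => by
        rw [← powApplyAdd, show p + 1 + (k - 1 - j) = n + 1 - 1 - j by
          have := Finset.mem_range.mp hj; omega])]
      exact h1
    have h4 : (A ^ p) ((A ^ k) x +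
        ∑ j ∈ Finset.range k, (A ^ (k - 1 - j)) (C ((B ^ j) y))) = 0 := by
      have hmm : _ ∈ LinearMap.ker ((A ^ (p + 1) : X →L[ℂ] X) : X →ₗ[ℂ] X) := LinearMap.mem_ker.mpr h3
      rw [← hp] at hmm
      exact LinearMap.mem_ker.mp hmm
    refine LinearMap.mem_ker.mpr ?_
    rw [hM, ContinuousLinearMap.coe_coe, ucMat_pow_apply]
    rw [Prod.mk_eq_zero]
    refine ⟨?_, hBny⟩
    rw [sum_reduce _ n (by omega) y hky]
    rw [map_add, map_sum, ← powApplyAdd] at h4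
    rw [Finset.sum_congr rfl (fun j hj => by
      rw [← powApplyAdd, show p + (k - 1 - j) = n - 1 - j by
        have := Finset.mem_range.mp hj; omega])] at h4
    exact h4
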